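/- Let F be a finite field of odd characteristic with quadratic character λ, and define B(F, χ) := ∑_{x ∈ F} ∑_{z ∈ F^×} χ(z) · λ(x³ + x²z - 4xz). Then B(F, λ) = 1. -/

import Mathlib

open Finset
open scoped Classical

/-- Jacobi sum with the sign convention of the paper:
`j_F(χ₁, χ₂) = -∑_{x₁+x₂=1} χ₁(x₁)χ₂(x₂)`. -/
noncomputable def jac {F : Type*} [Field F] [Fintype F]
    (χ₁ χ₂ : MulChar F ℂ) : ℂ :=
  -∑ x : F, χ₁ x * χ₂ (1 - x)

/-- The double character sum `B(F, χ) = ∑_{x ∈ F} ∑_{z ∈ F^×} χ(z) λ(x³ + x²z - 4xz)`. -/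

noncomputable def Bsum (F : Type*) [Field F] [Fintype F]
    (χ lam : F → ℂ) : ℂ :=
  ∑ x : F, ∑ z ∈ Finset.univ.filter (fun z : F => z ≠ 0),
    χ z * lam (x ^ 3 + x ^ 2 * z - 4 * x * z)

section Aux

variable {F : Type*} [Field F] [Fintype F]

private lemma lam_mul_self (lam : MulChar F ℂ) (hl2 : lam ^ 2 = 1) {x : F} (hx : x ≠ 0) :
    lam x * lam x = 1 := by
  have h := congrArg (fun χ : MulChar F ℂ => χ x) hl2
  simp only [pow_two, MulChar.mul_apply] at h
  simpa [MulChar.one_apply (isUnit_iff_ne_zero.mpr hx)] using h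

/-- Key linear substitution lemma: for `a ≠ 0`,
`∑_{z ≠ 0} λ(a z + c) = -λ(c)`. -/
private lemma sum_lin (lam : MulChar F ℂ) (hsum0 : ∑ x : F, lam x = 0)
    {a : F} (ha : a ≠ 0) (c : F) :
    ∑ z ∈ Finset.univ.filter (fun z : F => z ≠ 0), lam (a * z + c) = - lam c := by
  have h1 : ∑ z ∈ Finset.univ.filter (fun z : F => z ≠ 0), lam (a * z + c)
      = ∑ w ∈ Finset.univ.filter (fun w : F => w ≠ c), lam w := by
    refine Finset.sum_bij' (fun z _ => a * z + c) (fun w _ => a⁻¹ * (w - c)) ?_ ?_ ?_ ?_ ?_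
    · intro z hz
      simp only [Finset.mem_filter, Finset.mem_univ, true_and] at hz ⊢
      intro h
      have hz0 : a * z = 0 := by
        have := sub_eq_zero.mpr h
        calc a * z = a * z + c - c := by ring
        _ = 0 := by rw [h]; ring
      rcases mul_eq_zero.mp hz0 with h' | h'
      · exact ha h'
      · exact hz h' 
    · intro w hw
      simp only [Finset.mem_filter, Finset.mem_univ, true_and] at hw ⊢
      exact mul_ne_zero (inv_ne_zero ha) (sub_ne_zero.mpr hw)
    · intro z hz; field_simp; ring
    · intro w hw; field_simp; ring
    · intro z hz; rfl
  rw [h1]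
  have h2 : Finset.univ.filter (fun w : F => w ≠ c) = Finset.univ.erase c := by
    ext w; simp [Finset.mem_erase]
  rw [h2, Finset.sum_erase_eq_sub (Finset.mem_univ c), hsum0]
  ring

/-- Inversion substitution: `∑_{z ≠ 0} f z⁻¹ = ∑_{z ≠ 0} f z`. -/
private lemma sum_inv (f : F → ℂ) :
    ∑ z ∈ Finset.univ.filter (fun z : F => z ≠ 0), f z⁻¹
      = ∑ z ∈ Finset.univ.filter (fun z : F => z ≠ 0), f z := by
  refine Finset.sum_bij' (fun z _ => z⁻¹) (fun z _ => z⁻¹) ?_ ?_ ?_ ?_ ?_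
  · intro z hz
    simp only [Finset.mem_filter, Finset.mem_univ, true_and] at hz ⊢
    exact inv_ne_zero hz
  · intro z hz
    simp only [Finset.mem_filter, Finset.mem_univ, true_and] at hz ⊢
    exact inv_ne_zero hz
  · intro z hz; simp
  · intro z hz; simp
  · intro z hz; rfl

end Aux

theorem Bsum_quadratic {F : Type*} [Field F] [Fintype F]
    (hchar : ringChar F ≠ 2)
    (lam : MulChar F ℂ) (hl2 : lam ^ 2 = 1) (hl1 : lam ≠ 1) :
    Bsum F ⇑lam ⇑lam = 1 := by
  classical
  have h2 : (2 : F) ≠ 0 := Ring.two_ne_zero hchar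
  have h4 : (4 : F) ≠ 0 := by
    have : (4 : F) = 2 * 2 := by norm_num
    rw [this]; exact mul_ne_zero h2 h2
  have hsum0 : ∑ x : F, lam x = 0 := MulChar.sum_eq_zero_of_ne_one hl1
  have hlam0 : lam (0 : F) = 0 := MulChar.map_zero lam
  -- Step 1: inner sum equals `-λ(x (x - 4))` for every `x`.
  have inner : ∀ x : F,
      ∑ z ∈ Finset.univ.filter (fun z : F => z ≠ 0),
        lam z * lam (x ^ 3 + x ^ 2 * z - 4 * x * z) = - lam (x * (x - 4)) := by
    intro x
    by_cases hx0 : x = 0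
    · subst hx0; simp [hlam0]
    by_cases hx4 : x - 4 = 0
    · have hx4' : x = 4 := by
        have := sub_eq_zero.mp hx4; exact this
      subst hx4'
      have : ∀ z : F, (4:F) ^ 3 + (4:F) ^ 2 * z - 4 * 4 * z = 64 := by intro z; ring
      simp only [this]
      rw [← Finset.sum_mul]
      have : ∑ z ∈ Finset.univ.filter (fun z : F => z ≠ 0), lam z = 0 := by
        have h2' : Finset.univ.filter (fun w : F => w ≠ (0:F)) = Finset.univ.erase 0 := by
          ext w; simp [Finset.mem_erase]
        rw [h2', Finset.sum_erase_eq_sub (Finset.mem_univ (0:F)), hsum0, hlam0, zero_sub, neg_zero]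
      rw [this, zero_mul]
      rw [show (4:F) * (4 - 4) = 0 by ring, hlam0, neg_zero]
    · -- main case: x ≠ 0, x ≠ 4
      have hb : x * (x - 4) ≠ 0 := mul_ne_zero hx0 hx4
      have hx3 : x ^ 3 ≠ 0 := pow_ne_zero 3 hx0
      have step1 : ∀ z ∈ Finset.univ.filter (fun z : F => z ≠ 0),
          lam z * lam (x ^ 3 + x ^ 2 * z - 4 * x * z)
            = lam (x ^ 3 * z⁻¹ + x * (x - 4)) := by
        intro z hz
        simp only [Finset.mem_filter, Finset.mem_univ, true_and] at hz
        rw [← map_mul lam]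
        have key : z * (x ^ 3 + x ^ 2 * z - 4 * x * z)
            = (z * z) * (x ^ 3 * z⁻¹ + x * (x - 4)) := by
          field_simp; ring
        rw [key, map_mul lam, map_mul lam, lam_mul_self lam hl2 hz, one_mul]
      rw [Finset.sum_congr rfl step1]
      have step2 : ∑ z ∈ Finset.univ.filter (fun z : F => z ≠ 0),
          lam (x ^ 3 * z⁻¹ + x * (x - 4))
          = ∑ z ∈ Finset.univ.filter (fun z : F => z ≠ 0),
            lam (x ^ 3 * z + x * (x - 4)) :=
        sum_inv (fun z => lam (x ^ 3 * z + x * (x - 4)))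
      rw [step2, sum_lin lam hsum0 hx3 (x * (x - 4))]
  -- Step 2: assemble
  unfold Bsum
  rw [Finset.sum_congr rfl fun x _ => inner x]
  rw [Finset.sum_neg_distrib]
  have hA : ∑ x : F, lam (x * (x - 4)) = -1 := by
    have h0 : ∑ x : F, lam (x * (x - 4))
        = ∑ x ∈ Finset.univ.filter (fun x : F => x ≠ 0), lam (x * (x - 4)) := by
      have he : Finset.univ.filter (fun x : F => x ≠ (0:F)) = Finset.univ.erase 0 := by
        ext w; simp [Finset.mem_erase]
      rw [he, Finset.sum_erase_eq_sub (Finset.mem_univ (0:F)),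
        show (0:F) * (0 - 4) = 0 by ring, hlam0, sub_zero]
    rw [h0]
    have step : ∀ x ∈ Finset.univ.filter (fun x : F => x ≠ 0),
        lam (x * (x - 4)) = lam (-4 * x⁻¹ + 1) := by
      intro x hx
      simp only [Finset.mem_filter, Finset.mem_univ, true_and] at hx
      have key : x * (x - 4) = (x * x) * (-4 * x⁻¹ + 1) := by field_simp; ring
      rw [key, map_mul lam, map_mul lam, lam_mul_self lam hl2 hx, one_mul]
    rw [Finset.sum_congr rfl step]
    rw [sum_inv (fun x => lam (-4 * x + 1)), sum_lin lam hsum0 (neg_ne_zero.mpr h4) 1,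
      MulChar.map_one]
  rw [hA]
  norm_num
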